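/- Consider the star S with lines spanned by v = (0,1) and w = (1/√2)(1,1) among its lines, the target point s = 2√2·(1,1), starting point x₀ = (0,3), and the iteration x_{k+1} = x_k − t·grad, where at a nonzero point x = λv on a line not containing s the update moves x by −(λ/‖x‖)·v scaled by step size 1 (i.e., x_{k+1} = x_k − (λ/|λ|)·v), at the origin the update moves by +(μ/‖s‖)·w where s = μw, and on the line containing s the update is x_{k+1} = x_k − ((λ−μ)/‖x−s‖)·w for x = λw, s = μw. With constant step size 1, the iteration reaches x₇ = s = 2√2·(1,1) after exactly 7 steps, with x₃ = (0,0). -/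

import Mathlib

/-- The concrete steepest-descent run on the star: with `v = (0,1)`,
`w = (1/√2)(1,1)`, `s = 2√2·(1,1) = μ·w`, start `x₀ = (0,3)` and constant step size 1,
where the update is `x_{k+1} = x_k − (λ/|λ|)·v` at `x_k = λ·v ≠ 0` (line not containing
`s`), `x_{k+1} = (μ/‖s‖)·w` at the origin, and `x_{k+1} = x_k − ((λ−μ)/‖x_k−s‖)·w` at
`x_k = λ·w ≠ 0` on the line of `s`, the iteration passes through the origin at step 3
and reaches `s` for the first time after exactly 7 steps. -/
theorem stmt16 (V W : EuclideanSpace ℝ (Fin 2))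
    (hV : V = ![(0 : ℝ), 1]) (hW : W = (Real.sqrt 2)⁻¹ • ![(1 : ℝ), 1])
    (s : EuclideanSpace ℝ (Fin 2)) (μ : ℝ) (hμ : μ = 4) (hs : s = μ • W)
    (x : ℕ → EuclideanSpace ℝ (Fin 2))
    (hx0 : x 0 = ![(0 : ℝ), 3])
    (hstep_v : ∀ (k : ℕ) (l : ℝ), l ≠ 0 → x k = l • V →
      x (k + 1) = x k - (l / |l|) • V)
    (hstep_0 : ∀ k : ℕ, x k = 0 → x (k + 1) = (μ / ‖s‖) • W)
    (hstep_w : ∀ (k : ℕ) (l : ℝ), l ≠ 0 → l ≠ μ → x k = l • W →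
      x (k + 1) = x k - ((l - μ) / ‖x k - s‖) • W) :
    x 3 = 0 ∧ x 7 = s ∧ ∀ k < 7, x k ≠ s := by
  have h2 : (0:ℝ) < Real.sqrt 2 := Real.sqrt_pos.mpr (by norm_num)
  have hWn : ‖W‖ = 1 := by
    rw [EuclideanSpace.norm_eq, hW]
    simp [Fin.sum_univ_two]
    norm_num
  have hx0' : x 0 = (3:ℝ) • V := by
    ext i; simp only [PiLp.smul_apply, hx0, hV]; fin_cases i <;> simp
  have hx1 : x 1 = (2:ℝ) • V := by
    rw [hstep_v 0 3 (by norm_num) hx0', hx0']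
    norm_num
    module
  have hx2 : x 2 = (1:ℝ) • V := by
    rw [hstep_v 1 2 (by norm_num) hx1, hx1]
    norm_num
    module
  have hx3 : x 3 = 0 := by
    rw [hstep_v 2 1 (by norm_num) hx2, hx2]
    norm_num
  have hsn : ‖s‖ = 4 := by
    rw [hs, hμ, norm_smul, hWn]; norm_num
  have hx4 : x 4 = (1:ℝ) • W := by
    rw [hstep_0 3 hx3, hsn, hμ]; norm_num
  have key : ∀ (k : ℕ) (l : ℝ), x k = l • W → 0 < l → l < 4 → x (k+1) = (l+1) • W := by
    intro k l hk hl0 hl4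
    have hdiff : x k - s = (l - 4) • W := by
      rw [hk, hs, hμ]; module
    have hdn : ‖x k - s‖ = 4 - l := by
      rw [hdiff, norm_smul, hWn, Real.norm_eq_abs, abs_of_neg (by linarith)]
      ring
    rw [hstep_w k l (ne_of_gt hl0) (by rw [hμ]; linarith) hk, hdn, hk]
    have hq : (l - μ) / (4 - l) = -1 := by
      rw [hμ, div_eq_iff (by linarith : (4:ℝ) - l ≠ 0)]; ring
    rw [hq]; module
  have hx5 : x 5 = (2:ℝ) • W := by
    have := key 4 1 hx4 (by norm_num) (by norm_num); norm_num at this; exact this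
  have hx6 : x 6 = (3:ℝ) • W := by
    have := key 5 2 hx5 (by norm_num) (by norm_num); norm_num at this; exact this
  have hx7 : x 7 = s := by
    have := key 6 3 hx6 (by norm_num) (by norm_num)
    rw [this, hs, hμ]; norm_num
  refine ⟨hx3, hx7, ?_⟩
  have hW0 : W 0 = (Real.sqrt 2)⁻¹ := by rw [hW]; simp
  have hV0 : V 0 = 0 := by rw [hV]; simp
  have hs0 : s 0 = 4 * (Real.sqrt 2)⁻¹ := by
    rw [hs, hμ]; simp [hW0]
  have hinv : (Real.sqrt 2)⁻¹ ≠ 0 := inv_ne_zero (ne_of_gt h2)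
  have hne : ∀ (c : ℝ), c ≠ 4 → (c • W : EuclideanSpace ℝ (Fin 2)) ≠ s := by
    intro c hc h
    have h0 := congrFun (congrArg WithLp.ofLp h) 0
    simp only [PiLp.smul_apply, smul_eq_mul, hW0, hs0] at h0
    exact hc (mul_right_cancel₀ hinv h0)
  have hneV : ∀ (c : ℝ), (c • V : EuclideanSpace ℝ (Fin 2)) ≠ s := by
    intro c h
    have h0 := congrFun (congrArg WithLp.ofLp h) 0
    simp only [PiLp.smul_apply, smul_eq_mul, hV0, hs0, mul_zero] at h0
    have := inv_pos.mpr h2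
    nlinarith
  intro k hk
  interval_cases k
  · rw [hx0']; exact hneV 3
  · rw [hx1]; exact hneV 2
  · rw [hx2]; exact hneV 1
  · rw [hx3, show (0:EuclideanSpace ℝ (Fin 2)) = (0:ℝ) • V by simp]; exact hneV 0
  · rw [hx4]; exact hne 1 (by norm_num)
  · rw [hx5]; exact hne 2 (by norm_num)
  · rw [hx6]; exact hne 3 (by norm_num)
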